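/- For the complete graph K_n on n vertices and every integer k with 1−n ≤ k ≤ n−1, the global defensive k-alliance number satisfies γ_k^a(K_n) = ⌈(n+k+1)/2⌉. -/

import Mathlib

/-- Number of neighbors that `v` has in `S`. -/
noncomputable def SimpleGraph.nbrCount {V : Type*} (G : SimpleGraph V) (S : Set V) (v : V) : ℕ :=
  (S ∩ {u | G.Adj v u}).ncard

/-- Degree of a vertex, counted via `ncard`. -/
noncomputable def SimpleGraph.degN {V : Type*} (G : SimpleGraph V) (v : V) : ℕ :=
  {u | G.Adj v u}.ncard

/-- `S` is a defensive `k`-alliance. -/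
def SimpleGraph.IsDefensiveAlliance {V : Type*} (G : SimpleGraph V) (k : ℤ) (S : Set V) : Prop :=
  S.Nonempty ∧ ∀ v ∈ S, (G.nbrCount Sᶜ v : ℤ) + k ≤ (G.nbrCount S v : ℤ)

/-- `S` is a dominating set. -/
def SimpleGraph.IsDominating {V : Type*} (G : SimpleGraph V) (S : Set V) : Prop :=
  ∀ v ∈ Sᶜ, ∃ u ∈ S, G.Adj v u

/-- `S` is a global defensive `k`-alliance. -/
def SimpleGraph.IsGlobalDefensiveAlliance {V : Type*} (G : SimpleGraph V) (k : ℤ) (S : Set V) : Prop :=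
  G.IsDefensiveAlliance k S ∧ G.IsDominating S

/-- Global defensive `k`-alliance number. -/
noncomputable def SimpleGraph.globalDefensiveAllianceNumber {V : Type*} (G : SimpleGraph V) (k : ℤ) : ℕ :=
  sInf {m | ∃ S : Set V, G.IsGlobalDefensiveAlliance k S ∧ S.ncard = m}

theorem global_defensive_alliance_number_complete (n : ℕ) (k : ℤ)
    (h1 : 1 - (n : ℤ) ≤ k) (h2 : k ≤ (n : ℤ) - 1) :
    ((⊤ : SimpleGraph (Fin n)).globalDefensiveAllianceNumber k : ℤ) =
      ⌈((n : ℚ) + k + 1) / 2⌉ := by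
  set c : ℤ := ⌈((n : ℚ) + k + 1) / 2⌉ with hc
  have hc1 : (n : ℤ) + k + 1 ≤ 2 * c := by
    have h := Int.le_ceil (((n : ℚ) + k + 1) / 2)
    rw [← hc] at h
    have h' : ((n : ℚ) + k + 1) ≤ 2 * (c : ℚ) := by linarith
    exact_mod_cast h'
  have hcle : ∀ m : ℤ, (n : ℤ) + k + 1 ≤ 2 * m → c ≤ m := by
    intro m hm
    rw [hc]
    apply Int.ceil_le.mpr
    rw [div_le_iff₀ (by norm_num : (0:ℚ) < 2)]
    exact_mod_cast (by linarith : (n : ℤ) + k + 1 ≤ m * 2)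
  have hcpos : 1 ≤ c := by linarith
  have hcn : c ≤ (n : ℤ) := hcle n (by linarith)
  set s : ℕ := c.toNat with hsdef
  have hs : (s : ℤ) = c := Int.toNat_of_nonneg (by linarith)
  have hadj : ∀ v : Fin n, {u | (⊤ : SimpleGraph (Fin n)).Adj v u} = {v}ᶜ := by
    intro v; ext u; simp [SimpleGraph.top_adj, ne_comm]
  have hnbr_in : ∀ (S : Set (Fin n)) (v : Fin n), v ∈ S →
      (⊤ : SimpleGraph (Fin n)).nbrCount S v = S.ncard - 1 := by
    intro S v hv
    rw [SimpleGraph.nbrCount, hadj, ← Set.diff_eq]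
    exact Set.ncard_diff_singleton_of_mem hv
  have hnbr_out : ∀ (S : Set (Fin n)) (v : Fin n), v ∉ S →
      (⊤ : SimpleGraph (Fin n)).nbrCount S v = S.ncard := by
    intro S v hv
    rw [SimpleGraph.nbrCount, hadj,
      Set.inter_eq_self_of_subset_left (Set.subset_compl_singleton_iff.mpr hv)]
  have hcompl : ∀ S : Set (Fin n), S.ncard + Sᶜ.ncard = n := by
    intro S
    have := Set.ncard_add_ncard_compl S
    simpa using this
  set P : Set ℕ :=
    {m | ∃ S : Set (Fin n),
      (⊤ : SimpleGraph (Fin n)).IsGlobalDefensiveAlliance k S ∧ S.ncard = m} with hP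
  have hsn : s ≤ n := by omega
  have hs1 : 1 ≤ s := by omega
  obtain ⟨T, -, hTcard⟩ := Finset.exists_subset_card_eq (s := (Finset.univ : Finset (Fin n))) (n := s)
    (by simpa using hsn)
  have hTne : (T : Set (Fin n)).Nonempty := by
    rw [Finset.coe_nonempty, ← Finset.card_pos, hTcard]; omega
  have hTnc : (T : Set (Fin n)).ncard = s := by rw [Set.ncard_coe_finset, hTcard]
  have hmem : s ∈ P := by
    refine ⟨(T : Set (Fin n)), ⟨⟨hTne, ?_⟩, ?_⟩, hTnc⟩
    · intro v hv
      rw [hnbr_in _ v hv, hnbr_out _ v (by simp [hv]), hTnc]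
      have h3 := hcompl (T : Set (Fin n))
      rw [hTnc] at h3
      omega
    · intro v hv
      obtain ⟨u, hu⟩ := hTne
      refine ⟨u, hu, ?_⟩
      simp only [SimpleGraph.top_adj]
      rintro rfl
      exact hv hu
  have hlow : ∀ m ∈ P, s ≤ m := by
    rintro m ⟨S, ⟨⟨hne, hdef⟩, -⟩, rfl⟩
    obtain ⟨v, hv⟩ := hne
    have h1 := hdef v hv
    rw [hnbr_in S v hv, hnbr_out _ v (by simp [hv])] at h1
    have hm1 : 1 ≤ S.ncard := ((Set.ncard_pos (Set.toFinite S)).mpr ⟨v, hv⟩)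
    have h3 := hcompl S
    have h4 : (n : ℤ) + k + 1 ≤ 2 * (S.ncard : ℤ) := by omega
    have := hcle _ h4
    omega
  have hinf : sInf P = s := le_antisymm (Nat.sInf_le hmem) (le_csInf ⟨s, hmem⟩ hlow)
  show ((sInf P : ℕ) : ℤ) = c
  rw [hinf, hs]
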